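/- (Uniform matroid example) Fix n ≥ 1 and 1 ≤ d < n, and let T = {F ⊆ {1,…,n} : |F| ≤ d} be the independence complex of the uniform matroid U_n^d, whose minimal nonfaces are the (d+1)-element subsets of {1,…,n}. Let S be the simplicial complex on vertex set {1,…,n+1} whose minimal nonfaces are the sets J ∪ {n+1} for J ⊆ {1,…,n} with |J| = d + 1. Then S satisfies property I with witnesses the (d+1)-element subsets of {1,…,n}, its auxiliary complex T(S) equals T, and χ_c(S)(t) = t^{n+1} · Σ_{j=0}^{d} (n choose j) t^{−j} (1 − t^{−1})^{n−j} in ℤ[t,t⁻¹]. -/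

import Mathlib

open Finset LaurentPolynomial

noncomputable section

/-- The union `σ_I = ⋃_{i ∈ I} σ_i`. -/
def unionOver {ι V : Type*} [DecidableEq V] (σ : ι → Finset V) (I : Finset ι) : Finset V :=
  I.sup σ

/-- The intersection graph `G_I` on the vertex set `I`. -/
def interGraph {ι V : Type*} [DecidableEq V] (σ : ι → Finset V) (I : Finset ι) :
    SimpleGraph {i // i ∈ I} where
  Adj i j := i ≠ j ∧ (σ i.1 ∩ σ j.1).Nonempty
  symm := by
    refine ⟨?_⟩
    intro i j h
    exact ⟨h.1.symm, by rw [Finset.inter_comm]; exact h.2⟩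
  loopless := ⟨by intro i h; exact h.1 rfl⟩

/-- `c(I)`, the number of connected components of `G_I`. -/
def compCount {ι V : Type*} [DecidableEq V] (σ : ι → Finset V) (I : Finset ι) : ℕ :=
  Nat.card (interGraph σ I).ConnectedComponent

/-- Property I. -/
def PropertyI {ι V W : Type*} [DecidableEq V] [DecidableEq W]
    (σ : ι → Finset V) (α : ι → Finset W) : Prop :=
  (∀ i, (α i).card + 1 = (σ i).card) ∧
  ∀ I : Finset ι, I.Nonempty → ∀ p ∉ I,
    (unionOver σ I ∩ σ p = ∅ → unionOver α I ∩ α p = ∅) ∧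
    ((unionOver σ I ∩ σ p).Nonempty →
      (unionOver α I ∩ α p).card + 1 = (unionOver σ I ∩ σ p).card)

/-- The simplicial chromatic polynomial. -/
def simpChrom {ι : Type*} [Fintype ι] [DecidableEq ι] {n : ℕ} (σ : ι → Finset (Fin n)) :
    LaurentPolynomial ℤ :=
  T (n : ℤ) +
  ∑ I ∈ (univ : Finset ι).powerset.filter (fun I => I.Nonempty),
    (-1) ^ I.card *
      T ((n : ℤ) - ((unionOver σ I).card : ℤ) + (compCount σ I : ℤ))

/-- Faces of the complex whose minimal nonfaces are the `α i`. -/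
def facesOf {ι : Type*} [Fintype ι] {N : ℕ} (α : ι → Finset (Fin N)) :
    Finset (Finset (Fin N)) :=
  (univ : Finset (Finset (Fin N))).filter (fun F => ∀ i, ¬ α i ⊆ F)

/-- Coefficient of `t^k` in a Laurent polynomial. -/
def lcoeff (p : LaurentPolynomial ℤ) (k : ℤ) : ℤ := p.coeff k

end

section MyHelpers

open Finset

/-- Sum of `X^|H|` over subsets of `A`. -/
lemma myHelper_sum_pow {R : Type*} [CommRing R] {γ : Type*} [DecidableEq γ]
    (A : Finset γ) (X : R) :
    ∑ H ∈ A.powerset, X ^ H.card = (X + 1) ^ A.card := by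
  have h := Finset.prod_add (fun _ : γ => X) (fun _ => (1 : R)) A
  simp [Finset.prod_const] at h
  rw [← h]

/-- Alternating sum over a powerset, in any commutative ring. -/
lemma myHelper_neg_one_sum {R : Type*} [CommRing R] {γ : Type*} [DecidableEq γ]
    (s : Finset γ) :
    ∑ I ∈ s.powerset, (-1 : R) ^ I.card = if s = ∅ then 1 else 0 := by
  have h := Finset.sum_powerset_neg_one_pow_card (x := s)
  have h2 : ((∑ m ∈ s.powerset, (-1 : ℤ) ^ m.card : ℤ) : R)
      = ∑ m ∈ s.powerset, (-1 : R) ^ m.card := by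
    push_cast
    rfl
  rw [← h2, h]
  split <;> simp

/-- Superset expansion: `(X+1)^(n-|U|) = Σ_{U ⊆ G ⊆ [n]} X^(n-|G|)`. -/
lemma myHelper_superset {R : Type*} [CommRing R] (n : ℕ) (U : Finset (Fin n)) (X : R) :
    ∑ G ∈ (univ : Finset (Fin n)).powerset.filter (fun G => U ⊆ G), X ^ (n - G.card)
      = (X + 1) ^ (n - U.card) := by
  have hc : ((univ : Finset (Fin n)) \ U).card = n - U.card := by
    rw [Finset.card_sdiff_of_subset (Finset.subset_univ U)]
    simp
  rw [← hc, ← myHelper_sum_pow ((univ : Finset (Fin n)) \ U) X]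
  refine Finset.sum_nbij' (fun G => (univ : Finset (Fin n)) \ G)
    (fun H => (univ : Finset (Fin n)) \ H) ?_ ?_ ?_ ?_ ?_
  · intro G hG
    simp only [Finset.mem_filter, Finset.mem_powerset] at hG
    exact Finset.mem_powerset.mpr (Finset.sdiff_subset_sdiff (Finset.Subset.refl _) hG.2)
  · intro H hH
    simp only [Finset.mem_powerset] at hH
    simp only [Finset.mem_filter, Finset.mem_powerset]
    refine ⟨Finset.sdiff_subset, ?_⟩
    intro x hx
    simp only [Finset.mem_sdiff, Finset.mem_univ, true_and]
    intro hxH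
    have := hH hxH
    simp [Finset.mem_sdiff] at this
    exact this hx
  · intro G _
    simp [Finset.sdiff_sdiff_self_left]
  · intro H _
    simp [Finset.sdiff_sdiff_self_left]
  · intro G hG
    simp only [Finset.mem_filter, Finset.mem_powerset] at hG
    rw [Finset.card_sdiff_of_subset (Finset.subset_univ G)]
    simp

/-- The intersection graph has one component when all the sets share a common point. -/
lemma myHelper_comp {ι V : Type*} [DecidableEq V] (σ : ι → Finset V) (I : Finset ι)
    (hI : I.Nonempty) (x : V) (hx : ∀ i, x ∈ σ i) : compCount σ I = 1 := by
  rw [compCount, Nat.card_eq_one_iff_unique]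
  constructor
  · constructor
    intro a b
    refine SimpleGraph.ConnectedComponent.ind
      (fun v => SimpleGraph.ConnectedComponent.ind (fun w => ?_) b) a
    apply SimpleGraph.ConnectedComponent.sound
    by_cases h : v = w
    · subst h; exact SimpleGraph.Reachable.refl _
    · exact SimpleGraph.Adj.reachable
        ⟨h, ⟨x, Finset.mem_inter.mpr ⟨hx _, hx _⟩⟩⟩
  · obtain ⟨i, hi⟩ := hI
    exact ⟨SimpleGraph.connectedComponentMk _ ⟨i, hi⟩⟩

/-- Intersection of two "cones over the last vertex". -/
lemma myHelper_inter (n : ℕ) (A B : Finset (Fin n)) :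
    (insert (Fin.last n) (A.image Fin.castSucc)) ∩ (insert (Fin.last n) (B.image Fin.castSucc))
      = insert (Fin.last n) ((A ∩ B).image Fin.castSucc) := by
  ext x
  constructor
  · intro hx
    rw [Finset.mem_inter] at hx
    obtain ⟨h1, h2⟩ := hx
    rcases Finset.mem_insert.mp h1 with rfl | h1
    · exact Finset.mem_insert_self _ _
    · obtain ⟨a, ha, rfl⟩ := Finset.mem_image.mp h1
      rcases Finset.mem_insert.mp h2 with h | h2
      · exact absurd h (Fin.castSucc_lt_last a).ne
      · obtain ⟨b, hb, hba⟩ := Finset.mem_image.mp h2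
        have hba' : b = a := Fin.castSucc_injective n hba
        subst hba'
        exact Finset.mem_insert_of_mem
          (Finset.mem_image_of_mem _ (Finset.mem_inter.mpr ⟨ha, hb⟩))
  · intro hx
    rcases Finset.mem_insert.mp hx with rfl | hx
    · exact Finset.mem_inter.mpr ⟨Finset.mem_insert_self _ _, Finset.mem_insert_self _ _⟩
    · obtain ⟨a, ha, rfl⟩ := Finset.mem_image.mp hx
      rw [Finset.mem_inter] at ha
      exact Finset.mem_inter.mpr
        ⟨Finset.mem_insert_of_mem (Finset.mem_image_of_mem _ ha.1),
         Finset.mem_insert_of_mem (Finset.mem_image_of_mem _ ha.2)⟩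

/-- Cardinality of a cone over the last vertex. -/
lemma myHelper_card_insert (n : ℕ) (A : Finset (Fin n)) :
    (insert (Fin.last n) (A.image Fin.castSucc)).card = A.card + 1 := by
  rw [Finset.card_insert_of_notMem, Finset.card_image_of_injective _ (Fin.castSucc_injective n)]
  simp only [Finset.mem_image, not_exists]
  intro a
  rintro ⟨-, h⟩
  exact absurd h (Fin.castSucc_lt_last a).ne

/-- The union of cones is the cone over the union. -/
lemma myHelper_union {n d : ℕ}
    (σ : {J : Finset (Fin n) // J.card = d + 1} → Finset (Fin (n + 1)))
    (hσ : ∀ J, σ J = insert (Fin.last n) ((J : Finset (Fin n)).image Fin.castSucc))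
    (I : Finset {J : Finset (Fin n) // J.card = d + 1}) (hI : I.Nonempty) :
    unionOver σ I = insert (Fin.last n)
      ((unionOver (fun J : {J : Finset (Fin n) // J.card = d + 1} =>
        (J : Finset (Fin n))) I).image Fin.castSucc) := by
  ext x
  simp only [unionOver, Finset.mem_sup, hσ, Finset.mem_insert, Finset.mem_image]
  constructor
  · rintro ⟨i, hi, h⟩
    rcases h with h | ⟨a, ha, rfl⟩
    · exact Or.inl h
    · exact Or.inr ⟨a, ⟨i, hi, ha⟩, rfl⟩
  · rintro (rfl | ⟨a, ⟨i, hi, ha⟩, rfl⟩)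
    · obtain ⟨i, hi⟩ := hI
      exact ⟨i, hi, Or.inl rfl⟩
    · exact ⟨i, hi, Or.inr ⟨a, ha, rfl⟩⟩

end MyHelpers

set_option maxHeartbeats 2000000 in
/-- uniform matroid example: for `1 ≤ d < n`, let `T` be the independence
complex of `U_n^d` (faces: subsets of `{1,…,n}` of cardinality `≤ d`), whose minimal
nonfaces are the `(d+1)`-element subsets.  Let `S` be the complex on `{1,…,n+1}` whose
minimal nonfaces are the sets `J ∪ {n+1}` with `|J| = d+1`.  Then `S` satisfies property I
with witnesses the `(d+1)`-subsets, `T(S) = T`, and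
`χ_c(S)(t) = t^{n+1} · Σ_{j=0}^{d} (n choose j) t^{−j} (1 − t^{−1})^{n−j}`. -/
theorem stmt_19 (n d : ℕ) (hn : 1 ≤ n) (hd1 : 1 ≤ d) (hdn : d < n)
    (σ : {J : Finset (Fin n) // J.card = d + 1} → Finset (Fin (n + 1)))
    (hσ : ∀ J, σ J = insert (Fin.last n) ((J : Finset (Fin n)).image Fin.castSucc)) :
    PropertyI σ (fun J => (J : Finset (Fin n))) ∧
    (∀ F : Finset (Fin n),
      (∀ J : {J : Finset (Fin n) // J.card = d + 1}, ¬ (J : Finset (Fin n)) ⊆ F) ↔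
        F.card ≤ d) ∧
    simpChrom σ =
      T ((n : ℤ) + 1) *
        ∑ j ∈ Finset.range (d + 1),
          (n.choose j : LaurentPolynomial ℤ) * (T (-(j : ℤ)) * (1 - T (-1)) ^ (n - j)) := by
  classical
  set α : {J : Finset (Fin n) // J.card = d + 1} → Finset (Fin n) :=
    fun J => (J : Finset (Fin n)) with hα
  have hlast : ∀ J, Fin.last n ∈ σ J := fun J => by
    rw [hσ]; exact Finset.mem_insert_self _ _
  -- Part 2
  have part2 : ∀ F : Finset (Fin n),
      (∀ J : {J : Finset (Fin n) // J.card = d + 1}, ¬ (J : Finset (Fin n)) ⊆ F) ↔ F.card ≤ d := by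
    intro F
    constructor
    · intro h
      by_contra hc
      push_neg at hc
      obtain ⟨t, htF, htc⟩ := Finset.exists_subset_card_eq (show d + 1 ≤ F.card from hc)
      exact h ⟨t, htc⟩ htF
    · intro h J hJ
      have h2 := Finset.card_le_card hJ
      rw [J.2] at h2
      omega
  refine ⟨⟨?_, ?_⟩, part2, ?_⟩
  · -- cardinalities
    intro i
    rw [hσ, myHelper_card_insert, i.2]
  · -- property I second clause
    intro I hI p hp
    have hU := myHelper_union σ hσ I hI
    constructor
    · intro h
      exfalso
      have hmem : Fin.last n ∈ unionOver σ I ∩ σ p := by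
        rw [Finset.mem_inter]
        exact ⟨by rw [hU]; exact Finset.mem_insert_self _ _, hlast p⟩
      rw [h] at hmem
      exact absurd hmem (Finset.notMem_empty _)
    · intro _
      rw [hU, hσ, myHelper_inter, myHelper_card_insert]
  -- Part 3
  have hcard : ∀ I : Finset {J : Finset (Fin n) // J.card = d + 1}, I.Nonempty →
      ((unionOver σ I).card : ℤ) = ((unionOver α I).card : ℤ) + 1 := by
    intro I hI
    rw [myHelper_union σ hσ I hI, myHelper_card_insert]
    push_cast
    ring
  have hcomp : ∀ I : Finset {J : Finset (Fin n) // J.card = d + 1}, I.Nonempty → compCount σ I = 1 := fun I hI =>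
    myHelper_comp σ I hI (Fin.last n) hlast
  have hsubcard : ∀ I : Finset {J : Finset (Fin n) // J.card = d + 1}, (unionOver α I).card ≤ n := fun I =>
    le_trans (Finset.card_le_univ _) (by simp)
  set X : LaurentPolynomial ℤ := T 1 - 1 with hX
  have hX1 : X + 1 = T 1 := by rw [hX]; ring
  -- step 1: rewrite simpChrom as a sum over the full powerset
  have e1 : simpChrom σ = ∑ I ∈ (univ : Finset {J : Finset (Fin n) // J.card = d + 1}).powerset,
      (-1) ^ I.card * T ((n : ℤ) + 1 - ((unionOver α I).card : ℤ)) := by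
    rw [simpChrom,
      ← Finset.sum_filter_add_sum_filter_not ((univ : Finset {J : Finset (Fin n) // J.card = d + 1}).powerset)
        (fun I => I.Nonempty)
        (fun I => (-1 : LaurentPolynomial ℤ) ^ I.card *
          T ((n : ℤ) + 1 - ((unionOver α I).card : ℤ))),
      add_comm]
    congr 1
    · refine Finset.sum_congr rfl fun I hI => ?_
      simp only [Finset.mem_filter] at hI
      rw [hcomp I hI.2, hcard I hI.2]
      congr 2
      push_cast
      ring
    · have hfe : Finset.filter (fun I => ¬ I.Nonempty) (univ : Finset {J : Finset (Fin n) // J.card = d + 1}).powerset = {∅} := by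
        ext I
        simp [Finset.not_nonempty_iff_eq_empty]
      rw [hfe, Finset.sum_singleton]
      simp only [Finset.card_empty, pow_zero, one_mul]
      have hu : unionOver α (∅ : Finset {J : Finset (Fin n) // J.card = d + 1}) = ∅ := rfl
      rw [hu]
      congr 1
  -- step 2: inclusion–exclusion
  have e2 : ∑ I ∈ (univ : Finset {J : Finset (Fin n) // J.card = d + 1}).powerset,
        (-1 : LaurentPolynomial ℤ) ^ I.card * (X + 1) ^ (n - (unionOver α I).card)
      = ∑ G ∈ (univ : Finset (Fin n)).powerset,
          (if G.card ≤ d then X ^ (n - G.card) else 0) := by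
    calc ∑ I ∈ (univ : Finset {J : Finset (Fin n) // J.card = d + 1}).powerset,
          (-1 : LaurentPolynomial ℤ) ^ I.card * (X + 1) ^ (n - (unionOver α I).card)
        = ∑ I ∈ (univ : Finset {J : Finset (Fin n) // J.card = d + 1}).powerset, ∑ G ∈ (univ : Finset (Fin n)).powerset,
            (if unionOver α I ⊆ G then
              (-1 : LaurentPolynomial ℤ) ^ I.card * X ^ (n - G.card) else 0) := by
          refine Finset.sum_congr rfl fun I _ => ?_
          rw [← myHelper_superset n (unionOver α I) X, Finset.mul_sum, Finset.sum_filter]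
      _ = ∑ G ∈ (univ : Finset (Fin n)).powerset, ∑ I ∈ (univ : Finset {J : Finset (Fin n) // J.card = d + 1}).powerset,
            (if unionOver α I ⊆ G then
              (-1 : LaurentPolynomial ℤ) ^ I.card * X ^ (n - G.card) else 0) :=
          Finset.sum_comm
      _ = ∑ G ∈ (univ : Finset (Fin n)).powerset,
            (if G.card ≤ d then X ^ (n - G.card) else 0) := by
          refine Finset.sum_congr rfl fun G _ => ?_
          have hfilter : Finset.filter (fun I : Finset {J : Finset (Fin n) // J.card = d + 1} => unionOver α I ⊆ G)
              (univ : Finset {J : Finset (Fin n) // J.card = d + 1}).powerset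
              = (Finset.filter (fun J : {J : Finset (Fin n) // J.card = d + 1} => (J : Finset (Fin n)) ⊆ G) univ).powerset := by
            ext I
            simp only [Finset.mem_filter, Finset.mem_powerset, Finset.subset_univ, true_and]
            constructor
            · intro h i hi
              refine Finset.mem_filter.mpr ⟨Finset.mem_univ _, ?_⟩
              exact Finset.Subset.trans (Finset.le_sup hi) h
            · intro h
              exact Finset.sup_le fun i hi => (Finset.mem_filter.mp (h hi)).2
          rw [← Finset.sum_filter, hfilter, ← Finset.sum_mul,
            myHelper_neg_one_sum]
          have hAG : (Finset.filter (fun J : {J : Finset (Fin n) // J.card = d + 1} => (J : Finset (Fin n)) ⊆ G) univ = ∅)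
              ↔ G.card ≤ d := by
            rw [Finset.filter_eq_empty_iff]
            constructor
            · intro h
              exact (part2 G).mp (fun J => h (Finset.mem_univ J))
            · intro h J _
              exact (part2 G).mpr h J
          by_cases hGd : G.card ≤ d
          · rw [if_pos (hAG.mpr hGd), if_pos hGd, one_mul]
          · rw [if_neg (fun h => hGd (hAG.mp h)), if_neg hGd, zero_mul]
  -- step 3: group by cardinality
  have e3 : ∑ G ∈ (univ : Finset (Fin n)).powerset,
        (if G.card ≤ d then X ^ (n - G.card) else 0)
      = ∑ j ∈ Finset.range (d + 1), (n.choose j : LaurentPolynomial ℤ) * X ^ (n - j) := by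
    rw [Finset.sum_powerset]
    have hcu : ((univ : Finset (Fin n)).card) = n := by simp
    rw [hcu]
    have hterm : ∀ j ∈ Finset.range (n + 1),
        (∑ G ∈ Finset.powersetCard j (univ : Finset (Fin n)),
          (if G.card ≤ d then X ^ (n - G.card) else 0))
        = (if j ≤ d then (n.choose j : LaurentPolynomial ℤ) * X ^ (n - j) else 0) := by
      intro j _
      have hG : ∀ G ∈ Finset.powersetCard j (univ : Finset (Fin n)),
          (if G.card ≤ d then X ^ (n - G.card) else 0)
          = (if j ≤ d then X ^ (n - j) else 0) := by
        intro G hGm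
        rw [(Finset.mem_powersetCard.mp hGm).2]
      rw [Finset.sum_congr rfl hG, Finset.sum_const, Finset.card_powersetCard, hcu]
      by_cases hjd : j ≤ d
      · rw [if_pos hjd, if_pos hjd]
        simp [nsmul_eq_mul]
      · rw [if_neg hjd, if_neg hjd, smul_zero]
    rw [Finset.sum_congr rfl hterm, ← Finset.sum_filter]
    have hr : Finset.filter (fun j => j ≤ d) (Finset.range (n + 1)) = Finset.range (d + 1) := by
      ext j
      simp only [Finset.mem_filter, Finset.mem_range]
      omega
    rw [hr]
  -- conclusion
  rw [e1]
  have e4 : ∀ I : Finset {J : Finset (Fin n) // J.card = d + 1}, T ((n : ℤ) + 1 - ((unionOver α I).card : ℤ))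
      = T 1 * (X + 1) ^ (n - (unionOver α I).card) := by
    intro I
    rw [hX1, T_pow, ← T_add]
    congr 1
    rw [Nat.cast_sub (hsubcard I)]
    ring
  calc ∑ I ∈ (univ : Finset {J : Finset (Fin n) // J.card = d + 1}).powerset,
        (-1 : LaurentPolynomial ℤ) ^ I.card * T ((n : ℤ) + 1 - ((unionOver α I).card : ℤ))
      = T 1 * ∑ I ∈ (univ : Finset {J : Finset (Fin n) // J.card = d + 1}).powerset,
          (-1 : LaurentPolynomial ℤ) ^ I.card * (X + 1) ^ (n - (unionOver α I).card) := by
        rw [Finset.mul_sum]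
        refine Finset.sum_congr rfl fun I _ => ?_
        rw [e4 I]
        ring
    _ = T 1 * ∑ j ∈ Finset.range (d + 1),
          (n.choose j : LaurentPolynomial ℤ) * X ^ (n - j) := by rw [e2, e3]
    _ = T ((n : ℤ) + 1) * ∑ j ∈ Finset.range (d + 1),
          (n.choose j : LaurentPolynomial ℤ) * (T (-(j : ℤ)) * (1 - T (-1)) ^ (n - j)) := by
        rw [Finset.mul_sum, Finset.mul_sum]
        refine Finset.sum_congr rfl fun j hj => ?_
        have hjn : j ≤ n := by
          have := Finset.mem_range.mp hj
          omega
        have h1 : (1 : LaurentPolynomial ℤ) - T (-1) = T (-1) * X := by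
          rw [hX, mul_sub, ← T_add]
          simp
        rw [h1, mul_pow, T_pow]
        have hT : T ((n : ℤ) + 1) * (T (-(j : ℤ)) * T (((n - j : ℕ) : ℤ) * (-1)))
            = (T 1 : LaurentPolynomial ℤ) := by
          rw [← T_add, ← T_add]
          congr 1
          rw [Nat.cast_sub hjn]
          ring
        rw [← hT]
        ring
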